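/- For every real number d > 1, the improper integral ∫₀^{arcsin(1/d)} d / √(1 − d²·sin² t) dt converges and is strictly greater than π/2. -/

import Mathlib

open Set MeasureTheory

/-- The height of the tall rectangle exceeds π: for every `d > 1`, the improper
integral `∫₀^{arcsin(1/d)} d/√(1 − d² sin² t) dt` converges and is `> π/2`. -/
theorem tall_rectangle_half_height_gt_pi_div_two (d : ℝ) (hd : 1 < d) :
    IntegrableOn (fun t => d / Real.sqrt (1 - d ^ 2 * Real.sin t ^ 2))
      (Set.Ioo 0 (Real.arcsin (1 / d))) volume ∧
    Real.pi / 2 < ∫ t in Set.Ioo 0 (Real.arcsin (1 / d)),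
      d / Real.sqrt (1 - d ^ 2 * Real.sin t ^ 2) := by
  have hd0 : (0:ℝ) < d := by linarith
  set θ := Real.arcsin (1 / d) with hθdef
  have h1d0 : (0:ℝ) < 1 / d := by positivity
  have h1d1 : (1:ℝ) / d < 1 := by
    rw [div_lt_one hd0]; exact hd
  have hθ0 : 0 < θ := Real.arcsin_pos.2 h1d0
  have hθπ : θ < Real.pi / 2 := Real.arcsin_lt_pi_div_two.2 h1d1
  have hsinθ : Real.sin θ = 1 / d := Real.sin_arcsin (by linarith) h1d1.le
  have hcosθ : 0 < Real.cos θ := Real.cos_pos_of_mem_Ioo ⟨by linarith, hθπ⟩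
  -- facts on Ioo 0 θ
  have hsin_pos : ∀ t ∈ Ioo 0 θ, 0 < Real.sin t := fun t ht =>
    Real.sin_pos_of_pos_of_lt_pi ht.1 (by nlinarith [Real.pi_pos, ht.2])
  have hsin_lt : ∀ t ∈ Ioo 0 θ, d * Real.sin t < 1 := by
    intro t ht
    have : Real.sin t < Real.sin θ := by
      apply Real.strictMonoOn_sin ⟨by linarith [ht.1, Real.pi_pos], by linarith [ht.2]⟩
        ⟨by linarith [Real.pi_pos], hθπ.le⟩ ht.2
    rw [hsinθ] at this
    calc d * Real.sin t < d * (1 / d) := by nlinarith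
      _ = 1 := by field_simp
  have hkey : ∀ t ∈ Ioo 0 θ, 0 < 1 - d ^ 2 * Real.sin t ^ 2 := by
    intro t ht
    have h1 := hsin_pos t ht
    have h2 := hsin_lt t ht
    have h3 : 0 < d * Real.sin t := mul_pos hd0 h1
    nlinarith [h3, h2]
  have hcos_pos : ∀ t ∈ Ioo 0 θ, 0 < Real.cos t := fun t ht =>
    Real.cos_pos_of_mem_Ioo ⟨by linarith [ht.1], by linarith [ht.2]⟩
  have hcos_ge : ∀ t ∈ Ioo 0 θ, Real.cos θ ≤ Real.cos t := by
    intro t ht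
    exact (Real.strictAntiOn_cos ⟨ht.1.le, by linarith [Real.pi_pos, ht.2]⟩
      ⟨by linarith [ht.1], by linarith [Real.pi_pos]⟩ ht.2).le
  have hcos_le1 : ∀ t : ℝ, Real.cos t ≤ 1 := Real.cos_le_one
  -- the comparison function g and antiderivative G
  set g : ℝ → ℝ := fun t => 1 / Real.sqrt (1 - d ^ 2 * Real.sin t ^ 2) * (d * Real.cos t)
    with hgdef
  set G : ℝ → ℝ := fun t => Real.arcsin (d * Real.sin t) with hGdef
  have hGderiv : ∀ t ∈ Ioo 0 θ, HasDerivAt G (g t) t := by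
    intro t ht
    have h1 : d * Real.sin t ≠ -1 := by nlinarith [hsin_pos t ht]
    have h2 : d * Real.sin t ≠ 1 := ne_of_lt (hsin_lt t ht)
    have h := (Real.hasDerivAt_arcsin h1 h2).comp t
      ((Real.hasDerivAt_sin t).const_mul d)
    convert h using 1
    · rfl
    · rfl
    · rfl
    rw [hgdef]
    simp only [mul_pow]
  have hGcont : ContinuousOn G (Icc 0 θ) :=
    (Real.continuous_arcsin.comp (continuous_const.mul Real.continuous_sin)).continuousOn
  have hg_nonneg : ∀ t ∈ Ioo 0 θ, 0 ≤ g t := by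
    intro t ht
    have := hcos_pos t ht
    have : (0:ℝ) ≤ Real.sqrt (1 - d ^ 2 * Real.sin t ^ 2) := Real.sqrt_nonneg _
    positivity
  have hg_int : IntegrableOn g (Ioc 0 θ) volume :=
    intervalIntegral.integrableOn_deriv_of_nonneg hGcont hGderiv hg_nonneg
  have hg_intIoo : IntegrableOn g (Ioo 0 θ) volume :=
    hg_int.mono_set Ioo_subset_Ioc_self
  have hGθ : G θ = Real.pi / 2 := by
    rw [hGdef]
    simp only
    rw [hsinθ]
    rw [mul_one_div, div_self (ne_of_gt hd0), Real.arcsin_one]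
  have hG0 : G 0 = 0 := by simp [hGdef]
  have hg_integral : ∫ t in Ioo 0 θ, g t = Real.pi / 2 := by
    have h := intervalIntegral.integral_eq_sub_of_hasDeriv_right_of_le hθ0.le hGcont
      (fun t ht => (hGderiv t ht).hasDerivWithinAt)
      ((intervalIntegrable_iff_integrableOn_Ioc_of_le hθ0.le).2 hg_int)
    rw [intervalIntegral.integral_of_le hθ0.le] at h
    rw [← integral_Ioc_eq_integral_Ioo, h, hGθ, hG0, sub_zero]
  set f : ℝ → ℝ := fun t => d / Real.sqrt (1 - d ^ 2 * Real.sin t ^ 2) with hfdef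
  -- pointwise bounds on Ioo
  have hfg_le : ∀ t ∈ Ioo 0 θ, f t ≤ (Real.cos θ)⁻¹ * g t := by
    intro t ht
    have hs : 0 < Real.sqrt (1 - d ^ 2 * Real.sin t ^ 2) :=
      Real.sqrt_pos.2 (hkey t ht)
    have hct := hcos_pos t ht
    have hle := hcos_ge t ht
    rw [hfdef, hgdef]
    simp only
    rw [div_le_iff₀ hs]
    have : (Real.cos θ)⁻¹ * (1 / Real.sqrt (1 - d ^ 2 * Real.sin t ^ 2) * (d * Real.cos t)) *
        Real.sqrt (1 - d ^ 2 * Real.sin t ^ 2)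
        = d * (Real.cos t / Real.cos θ) := by
      field_simp
    rw [this]
    have h1 : (1:ℝ) ≤ Real.cos t / Real.cos θ := (one_le_div hcosθ).2 hle
    nlinarith
  have hfg_gt : ∀ t ∈ Ioo 0 θ, g t < f t := by
    intro t ht
    have hs : 0 < Real.sqrt (1 - d ^ 2 * Real.sin t ^ 2) :=
      Real.sqrt_pos.2 (hkey t ht)
    have hct : Real.cos t < 1 := by
      have h := Real.strictAntiOn_cos ⟨le_rfl, Real.pi_pos.le⟩
        ⟨ht.1.le, by linarith [Real.pi_pos, ht.2]⟩ ht.1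
      rwa [Real.cos_zero] at h
    rw [hfdef, hgdef]
    simp only
    rw [one_div, inv_mul_eq_div, div_lt_div_iff₀ hs hs]
    nlinarith [mul_pos (mul_pos hd0 hs) (sub_pos.2 hct)]
  have hf_nonneg : ∀ t, 0 ≤ f t := by
    intro t
    rw [hfdef]
    positivity
  have hf_meas : AEStronglyMeasurable f (volume.restrict (Ioo 0 θ)) := by
    apply Measurable.aestronglyMeasurable
    apply Measurable.div measurable_const
    exact (Real.continuous_sqrt.comp (continuous_const.sub
      (continuous_const.mul (Real.continuous_sin.pow 2)))).measurable
  have hf_int : IntegrableOn f (Ioo 0 θ) volume := by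
    apply Integrable.mono' (hg_intIoo.const_mul (Real.cos θ)⁻¹) hf_meas
    rw [ae_restrict_iff' measurableSet_Ioo]
    filter_upwards with t ht
    rw [Real.norm_of_nonneg (hf_nonneg t)]
    exact hfg_le t ht
  refine ⟨hf_int, ?_⟩
  have hdiff_int : IntegrableOn (fun t => f t - g t) (Ioo 0 θ) volume :=
    hf_int.sub hg_intIoo
  have hsupp : Ioo 0 θ ⊆ Function.support (fun t => f t - g t) ∩ Ioo 0 θ := by
    intro t ht
    exact ⟨ne_of_gt (sub_pos.2 (hfg_gt t ht)), ht⟩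
  have hnn : 0 ≤ᶠ[ae (volume.restrict (Ioo 0 θ))] fun t => f t - g t := by
    filter_upwards [ae_restrict_mem measurableSet_Ioo] with t ht
    exact sub_nonneg.2 (hfg_gt t ht).le
  have hdiff_pos : 0 < ∫ t in Ioo 0 θ, (f t - g t) := by
    rw [setIntegral_pos_iff_support_of_nonneg_ae hnn hdiff_int]
    refine lt_of_lt_of_le ?_ (measure_mono hsupp)
    rw [Real.volume_Ioo]
    simp [hθ0]
  have := integral_sub hf_int hg_intIoo
  rw [this] at hdiff_pos
  rw [hg_integral] at hdiff_pos
  linarith
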